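/- For real parameters a₀, a₁, a₂, a₃, a₄, a₅, a₆, the function u(x,y,t) = a₁ x² + a₂ y² + 4 a₁ a₂ t + a₀ exp[a₃ x + (2 a₂ a₃² − a₃⁴) t] + a₄ x + a₅ y + a₆ satisfies the equation uₜ = det(D²u) − Δ²u on ℝ² × ℝ. -/

import Mathlib

noncomputable section

/-- The explicit exponential-type solution on the plane. -/
def U (a₀ a₁ a₂ a₃ a₄ a₅ a₆ x y t : ℝ) : ℝ :=
  a₁ * x ^ 2 + a₂ * y ^ 2 + 4 * a₁ * a₂ * t +
    a₀ * Real.exp (a₃ * x + (2 * a₂ * a₃ ^ 2 - a₃ ^ 4) * t) +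
    a₄ * x + a₅ * y + a₆

/-- A family of functions closed under differentiation. -/
def F (A B C D k c : ℝ) : ℝ → ℝ :=
  fun x => A * x ^ 2 + B * Real.exp (k * x + c) + C * x + D

lemma hasDerivAt_F (A B C D k c x : ℝ) :
    HasDerivAt (F A B C D k c) (F 0 (B * k) (2 * A) C k c x) x := by
  have he : HasDerivAt (fun x : ℝ => k * x + c) k x := by
    simpa using ((hasDerivAt_id x).const_mul k).add_const c
  have h := ((((hasDerivAt_pow 2 x).const_mul A).add (he.exp.const_mul B)).add
    ((hasDerivAt_id x).const_mul C)).add_const D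
  refine (h.congr_of_eventuallyEq (Filter.Eventually.of_forall fun y => ?_)).congr_deriv ?_
  all_goals simp [F]
  all_goals ring_nf

lemma deriv_F (A B C D k c : ℝ) :
    deriv (F A B C D k c) = F 0 (B * k) (2 * A) C k c :=
  funext fun x => (hasDerivAt_F A B C D k c x).deriv

lemma iteratedDeriv_two_F (A B C D k c x : ℝ) :
    iteratedDeriv 2 (F A B C D k c) x = F 0 (B * k ^ 2) 0 (2 * A) k c x := by
  rw [show (2 : ℕ) = 1 + 1 from rfl, iteratedDeriv_succ, iteratedDeriv_one,
    deriv_F, deriv_F]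
  ring_nf

lemma iteratedDeriv_four_F (A B C D k c x : ℝ) :
    iteratedDeriv 4 (F A B C D k c) x = F 0 (B * k ^ 4) 0 0 k c x := by
  rw [show (4 : ℕ) = 3 + 1 from rfl, iteratedDeriv_succ,
    show (3 : ℕ) = 2 + 1 from rfl, iteratedDeriv_succ,
    show (2 : ℕ) = 1 + 1 from rfl, iteratedDeriv_succ, iteratedDeriv_one,
    deriv_F, deriv_F, deriv_F, deriv_F]
  ring_nf

/-- The exponential-type solution satisfies `uₜ = det(D²u) − Δ²u` on `ℝ² × ℝ`. -/
theorem stmt11 (a₀ a₁ a₂ a₃ a₄ a₅ a₆ x y t : ℝ) :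
    deriv (fun s => U a₀ a₁ a₂ a₃ a₄ a₅ a₆ x y s) t =
      (iteratedDeriv 2 (fun x' => U a₀ a₁ a₂ a₃ a₄ a₅ a₆ x' y t) x *
        iteratedDeriv 2 (fun y' => U a₀ a₁ a₂ a₃ a₄ a₅ a₆ x y' t) y -
        (deriv (fun x' => deriv (fun y' => U a₀ a₁ a₂ a₃ a₄ a₅ a₆ x' y' t) y) x) ^ 2) -
      (iteratedDeriv 4 (fun x' => U a₀ a₁ a₂ a₃ a₄ a₅ a₆ x' y t) x +
        2 * iteratedDeriv 2
          (fun x' => iteratedDeriv 2 (fun y' => U a₀ a₁ a₂ a₃ a₄ a₅ a₆ x' y' t) y) x +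
        iteratedDeriv 4 (fun y' => U a₀ a₁ a₂ a₃ a₄ a₅ a₆ x y' t) y) := by
  have hx : (fun x' => U a₀ a₁ a₂ a₃ a₄ a₅ a₆ x' y t) =
      F a₁ a₀ a₄ (a₂ * y ^ 2 + 4 * a₁ * a₂ * t + a₅ * y + a₆) a₃
        ((2 * a₂ * a₃ ^ 2 - a₃ ^ 4) * t) := by
    funext s; simp [U, F]; ring
  have hy : ∀ x' : ℝ, (fun y' => U a₀ a₁ a₂ a₃ a₄ a₅ a₆ x' y' t) =
      F a₂ 0 a₅ (a₁ * x' ^ 2 + 4 * a₁ * a₂ * t +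
        a₀ * Real.exp (a₃ * x' + (2 * a₂ * a₃ ^ 2 - a₃ ^ 4) * t) + a₄ * x' + a₆) 0 0 := by
    intro x'; funext s; simp [U, F]; ring
  have ht : (fun s => U a₀ a₁ a₂ a₃ a₄ a₅ a₆ x y s) =
      F 0 a₀ (4 * a₁ * a₂) (a₁ * x ^ 2 + a₂ * y ^ 2 + a₄ * x + a₅ * y + a₆)
        (2 * a₂ * a₃ ^ 2 - a₃ ^ 4) (a₃ * x) := by
    funext s; simp [U, F]; ring_nf
  have hmix : (fun x' => deriv (fun y' => U a₀ a₁ a₂ a₃ a₄ a₅ a₆ x' y' t) y) =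
      fun x' => 2 * a₂ * y + a₅ := by
    funext x'
    rw [hy x', deriv_F]
    simp [F]
  have hyy : (fun x' => iteratedDeriv 2 (fun y' => U a₀ a₁ a₂ a₃ a₄ a₅ a₆ x' y' t) y) =
      fun _ : ℝ => 2 * a₂ := by
    funext x'
    rw [hy x', iteratedDeriv_two_F]
    simp [F]
  have hcc : iteratedDeriv 2 (fun _ : ℝ => 2 * a₂) x = 0 := by
    rw [show (2:ℕ) = 1 + 1 from rfl, iteratedDeriv_succ, iteratedDeriv_one]
    simp
  rw [hx, ht, hy x, hmix, hyy, hcc]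
  rw [iteratedDeriv_two_F, iteratedDeriv_two_F, iteratedDeriv_four_F, iteratedDeriv_four_F]
  have hd : deriv (F 0 a₀ (4 * a₁ * a₂)
      (a₁ * x ^ 2 + a₂ * y ^ 2 + a₄ * x + a₅ * y + a₆)
      (2 * a₂ * a₃ ^ 2 - a₃ ^ 4) (a₃ * x)) t =
      F 0 (a₀ * (2 * a₂ * a₃ ^ 2 - a₃ ^ 4)) (2 * 0) (4 * a₁ * a₂)
        (2 * a₂ * a₃ ^ 2 - a₃ ^ 4) (a₃ * x) t := (hasDerivAt_F _ _ _ _ _ _ _).deriv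
  rw [hd]
  have h0 : (2 * a₂ * a₃ ^ 2 - a₃ ^ 4) * t + a₃ * x =
      a₃ * x + (2 * a₂ * a₃ ^ 2 - a₃ ^ 4) * t := by ring
  have hconst : deriv (fun _ : ℝ => (2 : ℝ) * a₂ * y + a₅) x = 0 := by
    simp
  simp only [F, h0, hconst]
  ring_nf
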